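/- Let ω_μ be an infinite regular ordinal and (X, d) a metric space over lexicographically ordered ℤ^{ω_μ}. If every open cover of X has a subcover of cardinality at most |ω_μ|, then X contains a dense subset of cardinality at most |ω_μ|, and hence has a basis of cardinality at most |ω_μ|. -/

import Mathlib

open TopologicalSpace Cardinal

/-- A metric on `X` with values in a linearly ordered abelian group `G`. -/
structure IsGMetric {X G : Type*} [AddCommGroup G] [LinearOrder G] [IsOrderedAddMonoid G] (d : X → X → G) : Prop where
  nonneg : ∀ x y, 0 ≤ d x y
  eq_zero_iff : ∀ x y, d x y = 0 ↔ x = y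
  symm : ∀ x y, d x y = d y x
  triangle : ∀ x y z, d x y ≤ d x z + d z y

/-- The element `r^l` of `Lex (ι → R)`: indicator of the coordinate `l`. -/
def unitVec {ι R : Type*} [DecidableEq ι] [Zero R] [One R] (l : ι) : Lex (ι → R) :=
  toLex fun m => if m = l then 1 else 0

/-- The open ball of a `G`-valued metric. -/
def gball {X G : Type*} [LT G] (d : X → X → G) (x : X) (g : G) : Set X := {y | d x y < g}

/-- The topology induced by a `G`-valued metric: generated by all open balls of
positive radius. -/
def gtop {X G : Type*} [AddCommGroup G] [LinearOrder G] [IsOrderedAddMonoid G] (d : X → X → G) : TopologicalSpace X :=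
  .generateFrom {s | ∃ x g, 0 < g ∧ s = gball d x g}

lemma unitVec_pos {ι : Type*} [LinearOrder ι] [WellFoundedLT ι] (l : ι) :
    (0 : Lex (ι → ℤ)) < unitVec l := by
  refine ⟨l, fun j hj => ?_, ?_⟩
  · have h : j ≠ l := ne_of_lt hj
    show (0 : ℤ) = if j = l then 1 else 0
    simp [h]
  · show (0 : ℤ) < if l = l then 1 else 0
    simp

lemma exists_two_unitVec_lt {ι : Type*} [LinearOrder ι] [WellFoundedLT ι] [NoMaxOrder ι]
    {g : Lex (ι → ℤ)} (hg : 0 < g) : ∃ l, unitVec l + unitVec l < g := by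
  obtain ⟨i, hi, hlt⟩ := hg
  obtain ⟨l, hl⟩ := exists_gt i
  refine ⟨l, i, fun j hj => ?_, ?_⟩
  · have h : j ≠ l := ne_of_lt (hj.trans hl)
    show ((if j = l then (1:ℤ) else 0) + (if j = l then 1 else 0)) = g j
    simp only [if_neg h, add_zero]
    exact hi j hj
  · have h : i ≠ l := ne_of_lt hl
    show ((if i = l then (1:ℤ) else 0) + (if i = l then 1 else 0)) < g i
    simp only [if_neg h, add_zero]
    exact hlt

theorem stmt14 {X : Type*} (κ : Cardinal) (hκ : κ.IsRegular)
    (d : X → X → Lex (κ.ord.ToType → ℤ)) (hd : IsGMetric d)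
    [tX : TopologicalSpace X] (htop : tX = gtop d)
    (hcov : ∀ C : Set (Set X), (∀ U ∈ C, IsOpen U) → ⋃₀ C = Set.univ →
      ∃ C' ⊆ C, #C' ≤ κ ∧ ⋃₀ C' = Set.univ) :
    (∃ A : Set X, Dense A ∧ #A ≤ κ) ∧
    ∃ B : Set (Set X), IsTopologicalBasis B ∧ #B ≤ κ := by
  haveI : NoMaxOrder κ.ord.ToType := Cardinal.noMaxOrder hκ.aleph0_le
  have hmkι : #κ.ord.ToType = κ := by rw [Cardinal.mk_toType, Cardinal.card_ord]
  haveI : Nonempty κ.ord.ToType := by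
    rw [← Cardinal.mk_ne_zero_iff, hmkι]; exact hκ.pos.ne'
  -- basic ball facts
  have hball_open : ∀ (a : X) (g : Lex (κ.ord.ToType → ℤ)), 0 < g → IsOpen (gball d a g) := by
    rw [htop]
    exact fun a g hg => TopologicalSpace.GenerateOpen.basic _ ⟨a, g, hg, rfl⟩
  have hmem_self : ∀ (a : X) (g : Lex (κ.ord.ToType → ℤ)), 0 < g → a ∈ gball d a g := by
    intro a g hg
    show d a a < g
    rw [(hd.eq_zero_iff a a).2 rfl]
    exact hg
  -- the collection of all balls is a topological basis
  have hB0 : IsTopologicalBasis {s : Set X | ∃ x g, 0 < g ∧ s = gball d x g} := by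
    refine ⟨?_, ?_, htop⟩
    · rintro t₁ ⟨a, g, hg, rfl⟩ t₂ ⟨b, h, hh, rfl⟩ x ⟨hx1, hx2⟩
      have hx1 : d a x < g := hx1
      have hx2 : d b x < h := hx2
      set ε := min (g - d a x) (h - d b x) with hε
      have hεpos : 0 < ε := lt_min (sub_pos.2 hx1) (sub_pos.2 hx2)
      refine ⟨gball d x ε, ⟨x, ε, hεpos, rfl⟩, hmem_self x ε hεpos, fun y hy => ?_⟩
      have hy : d x y < ε := hy
      constructor
      · show d a y < g
        calc d a y ≤ d a x + d x y := hd.triangle a y x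
          _ < d a x + (g - d a x) := add_lt_add_right (hy.trans_le (min_le_left _ _)) _
          _ = g := add_sub_cancel _ _
      · show d b y < h
        calc d b y ≤ d b x + d x y := hd.triangle b y x
          _ < d b x + (h - d b x) := add_lt_add_right (hy.trans_le (min_le_right _ _)) _
          _ = h := add_sub_cancel _ _
    · refine Set.eq_univ_of_forall fun x => ?_
      obtain ⟨l⟩ := ‹Nonempty κ.ord.ToType›
      exact ⟨gball d x (unitVec l), ⟨x, unitVec l, unitVec_pos l, rfl⟩,
        hmem_self x _ (unitVec_pos l)⟩
  -- subcovers of the unit-vector ball covers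
  have key : ∀ l : κ.ord.ToType, ∃ C' : Set (Set X),
      C' ⊆ Set.range (fun a : X => gball d a (unitVec l)) ∧ #C' ≤ κ ∧ ⋃₀ C' = Set.univ := by
    intro l
    obtain ⟨C', h1, h2, h3⟩ := hcov (Set.range fun a : X => gball d a (unitVec l))
      (by rintro U ⟨a, rfl⟩; exact hball_open a _ (unitVec_pos l))
      (Set.eq_univ_of_forall fun x =>
        ⟨gball d x (unitVec l), ⟨x, rfl⟩, hmem_self x _ (unitVec_pos l)⟩)
    exact ⟨C', h1, h2, h3⟩
  choose C' hsub hcard hcovl using key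
  have hcent : ∀ (l : κ.ord.ToType), ∀ U ∈ C' l, ∃ a : X, U = gball d a (unitVec l) := by
    intro l U hU
    obtain ⟨a, ha⟩ := hsub l hU
    exact ⟨a, ha.symm⟩
  choose cent hcent using hcent
  -- the basis and dense set
  set B : Set (Set X) := ⋃ l, C' l with hBdef
  set A : Set X := ⋃ l, Set.range (fun U : C' l => cent l U.1 U.2) with hAdef
  have hBcard : #B ≤ κ := by
    refine (Cardinal.mk_iUnion_le _).trans ?_
    calc #κ.ord.ToType * ⨆ l, #(C' l) ≤ κ * κ := by
          rw [hmkι]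
          exact mul_le_mul_right (ciSup_le' fun l => hcard l) κ
      _ = κ := Cardinal.mul_eq_self hκ.aleph0_le
  have hAcard : #A ≤ κ := by
    refine (Cardinal.mk_iUnion_le _).trans ?_
    calc #κ.ord.ToType * ⨆ l, #(Set.range (fun U : C' l => cent l U.1 U.2)) ≤ κ * κ := by
          rw [hmkι]
          exact mul_le_mul_right
            (ciSup_le' fun l => (Cardinal.mk_range_le).trans (hcard l)) κ
      _ = κ := Cardinal.mul_eq_self hκ.aleph0_le
  have hBbasis : IsTopologicalBasis B := by
    refine isTopologicalBasis_of_isOpen_of_nhds ?_ ?_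
    · intro U hU
      obtain ⟨l, hl⟩ := Set.mem_iUnion.1 hU
      rw [hcent l U hl]
      exact hball_open _ _ (unitVec_pos l)
    · intro x u hxu hu
      obtain ⟨v, ⟨a, g, hg, rfl⟩, hxv, hvu⟩ := hB0.exists_subset_of_mem_open hxu hu
      have hax : d a x < g := hxv
      have hεpos : 0 < g - d a x := sub_pos.2 hax
      obtain ⟨l, hl⟩ := exists_two_unitVec_lt hεpos
      have hxcov : x ∈ ⋃₀ C' l := (hcovl l).symm ▸ Set.mem_univ x
      obtain ⟨U, hU, hxU⟩ := hxcov
      refine ⟨U, Set.mem_iUnion.2 ⟨l, hU⟩, hxU, fun y hy => hvu ?_⟩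
      rw [hcent l U hU] at hxU hy
      have hbx : d (cent l U hU) x < unitVec l := hxU
      have hby : d (cent l U hU) y < unitVec l := hy
      show d a y < g
      calc d a y ≤ d a x + d x y := hd.triangle a y x
        _ ≤ d a x + (d x (cent l U hU) + d (cent l U hU) y) :=
            add_le_add_right (hd.triangle x y (cent l U hU)) _
        _ < d a x + (unitVec l + unitVec l) := by
            refine add_lt_add_right (add_lt_add ?_ hby) _
            rw [hd.symm]; exact hbx
        _ < d a x + (g - d a x) := add_lt_add_right hl _
        _ = g := add_sub_cancel _ _
  have hAdense : Dense A := by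
    rw [dense_iff_inter_open]
    intro u hu hne
    obtain ⟨x, hx⟩ := hne
    obtain ⟨U, hUB, hxU, hUu⟩ := hBbasis.exists_subset_of_mem_open hx hu
    obtain ⟨l, hl⟩ := Set.mem_iUnion.1 hUB
    refine ⟨cent l U hl, hUu ?_, Set.mem_iUnion.2 ⟨l, ⟨⟨U, hl⟩, rfl⟩⟩⟩
    exact (hcent l U hl).symm.subset (hmem_self _ _ (unitVec_pos l))
  exact ⟨⟨A, hAdense, hAcard⟩, ⟨B, hBbasis, hBcard⟩⟩
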